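/- arXiv:1111.5119 — 5 statements merged into one kernel-verified Lean document; each statement's English description precedes it below -/
import Mathlib

section
/- Let (X,d) be a complete separable metric space and f : X → ℝ a continuous function. Then the lower ascending slope along geodesics |∇g⁺f| is universally measurable; in fact, for every T ∈ ℝ the superlevel set {x : |∇g⁺f|(x) > T} is the projection to X of a Borel subset of X × Geo(X), hence analytic (Suslin). -/
open Filter Set Metric MeasureTheory Topology
open scoped ENNReal NNReal

variable {X : Type*} [MetricSpace X]

/-- A constant-speed geodesic parametrized on `[0,1]` (as a map from `ℝ`). -/
def IsGeodesicSeg (γ : ℝ → X) : Prop :=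
  ∀ s ∈ Set.Icc (0:ℝ) 1, ∀ t ∈ Set.Icc (0:ℝ) 1,
    dist (γ s) (γ t) = |t - s| * dist (γ 0) (γ 1)

/-- The lower ascending slope along geodesics `|∇g⁺ f|(x)`. -/
noncomputable def geoSlope (f : X → ℝ) (x : X) : ℝ≥0∞ :=
  ⨆ γ ∈ {γ : ℝ → X | IsGeodesicSeg γ ∧ γ 0 = x ∧ γ 0 ≠ γ 1},
    Filter.liminf (fun s => ENNReal.ofReal (max (f (γ s) - f x) 0 / dist (γ s) x))
      (nhdsWithin (0:ℝ) (Set.Ioi 0))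

lemma cap_compacts {n : ℕ → ℕ} : IsCompact {x : ℕ → ℕ | ∀ i, x i ≤ n i} := by
  have : {x : ℕ → ℕ | ∀ i, x i ≤ n i} = Set.pi univ (fun i => Iic (n i)) := by
    ext x; simp [Set.mem_pi, Pi.le_def]
  rw [this]
  exact isCompact_univ_pi fun i => (Set.finite_Iic _).isCompact

-- key topological lemma
lemma cap_key {α : Type*} [TopologicalSpace α] {f : (ℕ → ℕ) → α} (hf : Continuous f)
    (n : ℕ → ℕ) {U : Set α} (hU : IsOpen U)
    (hKU : f '' {x | ∀ i, x i ≤ n i} ⊆ U) :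
    ∃ k, f '' {x | ∀ i < k, x i ≤ n i} ⊆ U := by
  by_contra h
  push_neg at h
  have h' : ∀ k, ∃ v : ℕ → ℕ, (∀ i < k, v i ≤ n i) ∧ f v ∉ U := by
    intro k
    obtain ⟨y, hy, hyU⟩ := not_subset.1 (h k)
    obtain ⟨v, hv, rfl⟩ := hy
    exact ⟨v, hv, hyU⟩
  choose x hx hfx using h'
  set y : ℕ → (ℕ → ℕ) := fun k i => min (x k i) (n i) with hy
  have hyK : ∀ k, y k ∈ {x : ℕ → ℕ | ∀ i, x i ≤ n i} := fun k i => min_le_right _ _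
  obtain ⟨a, ha, φ, hφ, hconv⟩ := cap_compacts.tendsto_subseq hyK
  have hxconv : Tendsto (fun k => x (φ k)) atTop (𝓝 a) := by
    rw [tendsto_pi_nhds]
    intro i
    have h1 : Tendsto (fun k => y (φ k) i) atTop (𝓝 (a i)) :=
      ((continuous_apply i).tendsto a).comp hconv
    apply h1.congr'
    filter_upwards [eventually_gt_atTop i] with k hk
    have : i < φ k := lt_of_lt_of_le hk (hφ.le_apply)
    simp only [hy]
    exact min_eq_left (hx (φ k) i this)
  have hfa : f a ∈ U := hKU (mem_image_of_mem f ha)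
  have : ∀ᶠ k in atTop, f (x (φ k)) ∈ U :=
    ((hf.tendsto a).comp hxconv).eventually (hU.mem_nhds hfa)
  obtain ⟨k, hk⟩ := this.exists
  exact hfx (φ k) hk

-- supremum extraction
lemma cap_extract {B : ℕ → ℝ≥0∞} {a e : ℝ≥0∞} (ha : a = ⨆ m, B m) (hat : a ≠ ⊤)
    (he : e ≠ 0) : ∃ m, a ≤ B m + e := by
  rcases eq_or_ne a 0 with h0 | h0
  · exact ⟨0, h0 ▸ zero_le⟩
  by_cases hea : e ≤ a
  · have hlt : a - e < a := ENNReal.sub_lt_self hat h0 he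
    rw [ha] at hlt
    obtain ⟨m, hm⟩ := lt_iSup_iff.1 hlt
    rw [← ha] at hm
    refine ⟨m, ?_⟩
    calc a = a - e + e := (tsub_add_cancel_of_le hea).symm
      _ ≤ B m + e := add_le_add_left hm.le e
  · exact ⟨0, le_trans (le_of_not_ge hea) le_add_self⟩

lemma cap_step {α : Type*} [MeasurableSpace α]
    {f : (ℕ → ℕ) → α} (μ : Measure α) [IsFiniteMeasure μ]
    (S : Set (ℕ → ℕ)) (k : ℕ) {e : ℝ≥0∞} (he : e ≠ 0) :
    ∃ m, μ (f '' S) ≤ μ (f '' (S ∩ {x | x k ≤ m})) + e := by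
  have hU : (⋃ m, S ∩ {x | x k ≤ m}) = S := by
    ext x
    simp only [mem_iUnion, mem_inter_iff, mem_setOf_eq]
    exact ⟨fun ⟨m, h, _⟩ => h, fun h => ⟨x k, h, le_rfl⟩⟩
  have hmono : Monotone (fun m => f '' (S ∩ {x | x k ≤ m})) := fun m m' hmm' =>
    Set.image_mono (inter_subset_inter_right _ fun x hx => le_trans hx (by exact_mod_cast hmm'))
  have := hmono.measure_iUnion (μ := μ)
  have ha : μ (f '' S) = ⨆ m, μ (f '' (S ∩ {x | x k ≤ m})) := by
    rw [← this, ← image_iUnion, hU]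
  exact cap_extract ha (measure_ne_top μ _) he

lemma cap_geom {ε : ℝ≥0∞} (k : ℕ) :
    ∑ i ∈ Finset.range k, ε * 2⁻¹ ^ (i + 1) ≤ ε := by
  rw [← Finset.mul_sum]
  calc ε * ∑ i ∈ Finset.range k, (2⁻¹ : ℝ≥0∞) ^ (i + 1)
      ≤ ε * ∑' i : ℕ, (2⁻¹ : ℝ≥0∞) ^ (i + 1) := by
        gcongr
        exact ENNReal.sum_le_tsum _
    _ ≤ ε * 1 := by
        gcongr
        have h1 : ∑' i : ℕ, (2⁻¹ : ℝ≥0∞) ^ (i + 1) = 2⁻¹ * ∑' i : ℕ, (2⁻¹ : ℝ≥0∞) ^ i := by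
          rw [← ENNReal.tsum_mul_left]
          congr 1 with i
          rw [pow_succ, mul_comm]
        rw [h1, ENNReal.tsum_geometric]
        have : (1 : ℝ≥0∞) - 2⁻¹ = 2⁻¹ := by
          rw [ENNReal.one_sub_inv_two]
        rw [this, inv_inv]
        rw [ENNReal.inv_mul_cancel two_ne_zero ENNReal.ofNat_ne_top]
    _ = ε := mul_one ε

lemma cap_inner {α : Type*} [MetricSpace α] [MeasurableSpace α] [BorelSpace α]
    {f : (ℕ → ℕ) → α} (hf : Continuous f) (μ : Measure α) [IsFiniteMeasure μ]
    {ε : ℝ≥0∞} (hε : ε ≠ 0) :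
    ∃ K : Set α, IsCompact K ∧ K ⊆ range f ∧ μ (range f) ≤ μ K + (ε + ε) := by
  have hne : ∀ k : ℕ, ε * 2⁻¹ ^ (k + 1) ≠ 0 := fun k =>
    mul_ne_zero hε (pow_ne_zero _ (ENNReal.inv_ne_zero.2 ENNReal.ofNat_ne_top))
  -- recursive construction
  set pick : (ℕ → ℕ) → ℕ → ℕ := fun prev k =>
    Classical.choose (cap_step (f := f) μ {x | ∀ i < k, x i ≤ prev i} k (hne k)) with hpick
  set g : ℕ → (ℕ → ℕ) := fun k =>
    Nat.rec (motive := fun _ => ℕ → ℕ) (fun _ => 0)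
      (fun k prev => Function.update prev k (pick prev k)) k with hg
  have gsucc : ∀ k, g (k + 1) = Function.update (g k) k (pick (g k) k) := fun k => rfl
  set n : ℕ → ℕ := fun i => g (i + 1) i with hn
  have stable : ∀ k i, i < k → g k i = n i := by
    intro k
    induction k with
    | zero => intro i hi; exact absurd hi (Nat.not_lt_zero i)
    | succ k ih =>
      intro i hi
      rcases Nat.lt_succ_iff_lt_or_eq.1 hi with hik | rfl
      · rw [gsucc k, Function.update_of_ne (Nat.ne_of_lt hik), ih i hik]
      · rfl
  set C : ℕ → Set (ℕ → ℕ) := fun k => {x | ∀ i < k, x i ≤ n i} with hC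
  have hCg : ∀ k, {x : ℕ → ℕ | ∀ i < k, x i ≤ g k i} = C k := by
    intro k
    ext x
    exact forall₂_congr fun i hi => by rw [stable k i hi]
  have hpickn : ∀ k, pick (g k) k = n k := by
    intro k
    rw [hn]
    show pick (g k) k = g (k+1) k
    rw [gsucc k, Function.update_self]
  have spec : ∀ k, μ (f '' C k) ≤ μ (f '' (C k ∩ {x | x k ≤ n k})) + ε * 2⁻¹ ^ (k + 1) := by
    intro k
    have h2 := Classical.choose_spec (cap_step (f := f) μ {x | ∀ i < k, x i ≤ g k i} k (hne k))
    have e1 : pick (g k) k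
        = Classical.choose (cap_step (f := f) μ {x | ∀ i < k, x i ≤ g k i} k (hne k)) := rfl
    rw [← hpickn k, e1, ← hCg k]
    exact h2
  have Csucc : ∀ k, C k ∩ {x | x k ≤ n k} = C (k + 1) := by
    intro k
    ext x
    constructor
    · rintro ⟨h1, h2⟩ i hi
      rcases Nat.lt_succ_iff_lt_or_eq.1 hi with hik | rfl
      · exact h1 i hik
      · exact h2
    · intro h
      exact ⟨fun i hi => h i (hi.trans (Nat.lt_succ_self k)), h k (Nat.lt_succ_self k)⟩
  have chain : ∀ k, μ (range f) ≤ μ (f '' C k) + ∑ i ∈ Finset.range k, ε * 2⁻¹ ^ (i + 1) := by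
    intro k
    induction k with
    | zero =>
      simp only [Finset.range_zero, Finset.sum_empty, add_zero]
      have : C 0 = univ := by ext x; simp [hC]
      rw [this, image_univ]
    | succ k ih =>
      calc μ (range f) ≤ μ (f '' C k) + ∑ i ∈ Finset.range k, ε * 2⁻¹ ^ (i + 1) := ih
        _ ≤ (μ (f '' (C k ∩ {x | x k ≤ n k})) + ε * 2⁻¹ ^ (k + 1))
              + ∑ i ∈ Finset.range k, ε * 2⁻¹ ^ (i + 1) := add_le_add_left (spec k) _
        _ = μ (f '' C (k + 1)) + ∑ i ∈ Finset.range (k + 1), ε * 2⁻¹ ^ (i + 1) := by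
            rw [Csucc k, Finset.sum_range_succ]
            ring
  -- the compact set
  obtain ⟨U, hKU, hUopen, hUle⟩ :=
    Set.exists_isOpen_le_add (f '' {x : ℕ → ℕ | ∀ i, x i ≤ n i}) μ hε
  obtain ⟨k, hk⟩ := cap_key hf n hUopen hKU
  refine ⟨f '' {x : ℕ → ℕ | ∀ i, x i ≤ n i}, cap_compacts.image hf, image_subset_range _ _, ?_⟩
  calc μ (range f) ≤ μ (f '' C k) + ∑ i ∈ Finset.range k, ε * 2⁻¹ ^ (i + 1) := chain k
    _ ≤ μ U + ε := add_le_add (measure_mono hk) (cap_geom k)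
    _ ≤ (μ (f '' {x : ℕ → ℕ | ∀ i, x i ≤ n i}) + ε) + ε := add_le_add_left hUle _
    _ = _ := add_assoc _ _ _

theorem cap_nullMeasurable {α : Type*} [MetricSpace α] [MeasurableSpace α] [BorelSpace α]
    {s : Set α} (hs : MeasureTheory.AnalyticSet s) (μ : Measure α) [IsFiniteMeasure μ] :
    NullMeasurableSet s μ := by
  rw [MeasureTheory.AnalyticSet] at hs
  rcases hs with rfl | ⟨f, hf, rfl⟩
  · exact MeasurableSet.empty.nullMeasurableSet
  have h : ∀ j : ℕ, ∃ K : Set α, IsCompact K ∧ K ⊆ range f ∧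
      μ (range f) ≤ μ K + (((j : ℝ≥0∞) + 1)⁻¹ + ((j : ℝ≥0∞) + 1)⁻¹) := fun j =>
    cap_inner hf μ (by simp)
  choose K hKc hKs hKμ using h
  set B : Set α := ⋃ j, K j with hB
  have hBmeas : MeasurableSet B :=
    MeasurableSet.iUnion fun j => ((hKc j).isClosed).measurableSet
  have hBs : B ⊆ range f := iUnion_subset hKs
  have hμB : μ (range f) ≤ μ B := by
    refine ENNReal.le_of_forall_pos_le_add fun ε hε hB' => ?_
    obtain ⟨j, hj⟩ := ENNReal.exists_inv_nat_lt
      (show ((ε : ℝ≥0∞) / 2) ≠ 0 by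
        simp [ENNReal.div_eq_zero_iff, (by exact_mod_cast hε.ne' : (ε:ℝ≥0∞) ≠ 0)])
    have hj' : ((j : ℝ≥0∞) + 1)⁻¹ ≤ (ε : ℝ≥0∞) / 2 := by
      refine le_trans ?_ hj.le
      refine ENNReal.inv_le_inv.2 ?_
      exact le_add_of_nonneg_right (zero_le) |>.trans_eq rfl |>.trans le_rfl |>.trans le_rfl
    calc μ (range f) ≤ μ (K j) + (((j:ℝ≥0∞)+1)⁻¹ + ((j:ℝ≥0∞)+1)⁻¹) := hKμ j
      _ ≤ μ B + ((ε:ℝ≥0∞)/2 + (ε:ℝ≥0∞)/2) :=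
          add_le_add (measure_mono (subset_iUnion K j)) (add_le_add hj' hj')
      _ = μ B + ε := by rw [ENNReal.add_halves]
  have hμB' : μ B = μ (range f) := le_antisymm (measure_mono hBs) hμB
  -- s = B ∪ (s \ B) with s \ B null
  have hnull : μ (range f \ B) = 0 := by
    have hsub : range f \ B ⊆ toMeasurable μ (range f) \ B :=
      diff_subset_diff_left (subset_toMeasurable μ _)
    refine measure_mono_null hsub ?_
    have : μ (toMeasurable μ (range f) \ B) = μ (toMeasurable μ (range f)) - μ B := by
      refine measure_diff ((hBs.trans (subset_toMeasurable μ _))) hBmeas.nullMeasurableSet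
        (measure_ne_top μ B)
    rw [this, measure_toMeasurable, hμB', tsub_self]
  have : range f = B ∪ (range f \ B) := (union_diff_cancel hBs).symm
  rw [this]
  exact hBmeas.nullMeasurableSet.union (NullMeasurableSet.of_null hnull)

lemma geoSlope_exists_enum : ∃ e : ℕ → ℚ, e 0 = 0 ∧ e 1 = 1 ∧ (∀ n, e n ∈ Set.Icc (0:ℚ) 1) ∧
    ∀ t ∈ Set.Icc (0:ℚ) 1, ∃ n, e n = t := by
  have hne : Nonempty {t : ℚ // t ∈ Set.Icc (0:ℚ) 1} := ⟨⟨0, le_rfl, zero_le_one⟩⟩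
  obtain ⟨g, hg⟩ := exists_surjective_nat {t : ℚ // t ∈ Set.Icc (0:ℚ) 1}
  refine ⟨fun n => match n with | 0 => 0 | 1 => 1 | (n+2) => (g n : ℚ), rfl, rfl, ?_, ?_⟩
  · intro n
    match n with
    | 0 => exact ⟨le_rfl, zero_le_one⟩
    | 1 => exact ⟨zero_le_one, le_rfl⟩
    | (n+2) => exact (g n).2
  · intro t ht
    obtain ⟨n, hn⟩ := hg ⟨t, ht⟩
    exact ⟨n + 2, congrArg Subtype.val hn⟩

/-- Auxiliary Borel (in fact closed) set whose projection exhausts a superlevel set of the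
geodesic slope. -/
def geoF (f : X → ℝ) (e : ℕ → ℚ) (q δ r : ℚ) : Set (X × (ℕ → X)) :=
  {p | (∀ n m, dist (p.2 n) (p.2 m) = |(e m : ℝ) - (e n : ℝ)| * dist (p.2 0) (p.2 1)) ∧
    p.2 0 = p.1 ∧ (r : ℝ) ≤ dist (p.2 0) (p.2 1) ∧
    ∀ n, 0 < (e n : ℝ) → (e n : ℝ) < (δ : ℝ) →
      (q : ℝ) * dist (p.2 n) p.1 ≤ max (f (p.2 n) - f p.1) 0}

lemma geoF_closed {f : X → ℝ} (hf : Continuous f) (e : ℕ → ℚ) (q δ r : ℚ) :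
    IsClosed (geoF f e q δ r) := by
  have hcn : ∀ n : ℕ, Continuous (fun p : X × (ℕ → X) => p.2 n) := fun n =>
    (continuous_apply n).comp continuous_snd
  have h1 : IsClosed {p : X × (ℕ → X) |
      ∀ n m, dist (p.2 n) (p.2 m) = |(e m : ℝ) - (e n : ℝ)| * dist (p.2 0) (p.2 1)} := by
    rw [setOf_forall]
    refine isClosed_iInter fun n => ?_
    rw [setOf_forall]
    refine isClosed_iInter fun m => ?_
    exact isClosed_eq ((hcn n).dist (hcn m)) (continuous_const.mul ((hcn 0).dist (hcn 1)))
  have h2 : IsClosed {p : X × (ℕ → X) | p.2 0 = p.1} :=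
    isClosed_eq (hcn 0) continuous_fst
  have h3 : IsClosed {p : X × (ℕ → X) | (r : ℝ) ≤ dist (p.2 0) (p.2 1)} :=
    isClosed_le continuous_const ((hcn 0).dist (hcn 1))
  have h4 : IsClosed {p : X × (ℕ → X) | ∀ n, 0 < (e n : ℝ) → (e n : ℝ) < (δ : ℝ) →
      (q : ℝ) * dist (p.2 n) p.1 ≤ max (f (p.2 n) - f p.1) 0} := by
    rw [setOf_forall]
    refine isClosed_iInter fun n => ?_
    by_cases h : 0 < (e n : ℝ) ∧ (e n : ℝ) < (δ : ℝ)
    · have : {p : X × (ℕ → X) | 0 < (e n : ℝ) → (e n : ℝ) < (δ : ℝ) →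
          (q : ℝ) * dist (p.2 n) p.1 ≤ max (f (p.2 n) - f p.1) 0}
          = {p : X × (ℕ → X) | (q : ℝ) * dist (p.2 n) p.1 ≤ max (f (p.2 n) - f p.1) 0} := by
        ext p; simp [h.1, h.2]
      rw [this]
      exact isClosed_le (continuous_const.mul ((hcn n).dist continuous_fst))
        (((hf.comp (hcn n)).sub (hf.comp continuous_fst)).max continuous_const)
    · have : {p : X × (ℕ → X) | 0 < (e n : ℝ) → (e n : ℝ) < (δ : ℝ) →
          (q : ℝ) * dist (p.2 n) p.1 ≤ max (f (p.2 n) - f p.1) 0} = univ := by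
        ext p
        simp only [mem_setOf_eq, mem_univ, iff_true]
        intro hp1 hp2
        exact absurd ⟨hp1, hp2⟩ h
      rw [this]
      exact isClosed_univ
  have : geoF f e q δ r =
      ({p : X × (ℕ → X) | ∀ n m, dist (p.2 n) (p.2 m) = |(e m : ℝ) - (e n : ℝ)| * dist (p.2 0) (p.2 1)} ∩
        {p | p.2 0 = p.1} ∩ {p | (r : ℝ) ≤ dist (p.2 0) (p.2 1)} ∩
        {p | ∀ n, 0 < (e n : ℝ) → (e n : ℝ) < (δ : ℝ) →
          (q : ℝ) * dist (p.2 n) p.1 ≤ max (f (p.2 n) - f p.1) 0}) := by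
    ext p
    simp only [geoF, mem_setOf_eq, mem_inter_iff]
    tauto
  rw [this]
  exact ((h1.inter h2).inter h3).inter h4

lemma geoF_slope_le [CompleteSpace X]
    {f : X → ℝ} (hf : Continuous f) {e : ℕ → ℚ}
    (he0 : e 0 = 0) (he1 : e 1 = 1) (hemem : ∀ n, e n ∈ Set.Icc (0:ℚ) 1)
    (hesurj : ∀ t ∈ Set.Icc (0:ℚ) 1, ∃ n, e n = t)
    {q δ r : ℚ} (hq : 0 < q) (hδ : 0 < δ) (hr : 0 < r)
    {x : X} {u : ℕ → X} (hm : (x, u) ∈ geoF f e q δ r) :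
    ENNReal.ofReal q ≤ geoSlope f x := by
  obtain ⟨h1, h2, h3, h4⟩ := hm
  simp only at h1 h2 h3 h4
  set C : ℝ := dist (u 0) (u 1) with hCdef
  have hC : 0 < C := lt_of_lt_of_le (by exact_mod_cast hr) h3
  -- index function
  have hidx : ∀ t : ℚ, ∃ n, t ∈ Set.Icc (0:ℚ) 1 → e n = t := by
    intro t
    by_cases h : t ∈ Set.Icc (0:ℚ) 1
    · obtain ⟨n, hn⟩ := hesurj t h
      exact ⟨n, fun _ => hn⟩
    · exact ⟨0, fun h' => absurd h' h⟩
  choose idx hidxspec using hidx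
  -- clamp
  set clamp : ℚ → ℚ := fun t => max 0 (min 1 t) with hclampdef
  have hclampmem : ∀ t, clamp t ∈ Set.Icc (0:ℚ) 1 :=
    fun t => ⟨le_max_left _ _, max_le zero_le_one (min_le_left _ _)⟩
  have hclampid : ∀ t : ℚ, t ∈ Set.Icc (0:ℚ) 1 → clamp t = t := by
    intro t ht
    simp only [hclampdef]
    rw [min_eq_right ht.2, max_eq_right ht.1]
  have heclamp : ∀ t : ℚ, e (idx (clamp t)) = clamp t :=
    fun t => hidxspec (clamp t) (hclampmem t)
  -- the map on rationals
  set w : ℚ → X := fun t => u (idx (clamp t)) with hwdef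
  have hw : ∀ a b : ℚ, dist (w a) (w b) = |((clamp b : ℚ) : ℝ) - ((clamp a : ℚ) : ℝ)| * C := by
    intro a b
    simp only [hwdef]
    rw [h1 (idx (clamp a)) (idx (clamp b)), heclamp a, heclamp b]
  have hclamplip : ∀ a b : ℚ, |clamp b - clamp a| ≤ |b - a| := by
    intro a b
    simp only [hclampdef]
    calc |max 0 (min 1 b) - max 0 (min 1 a)| = |max (min 1 b) 0 - max (min 1 a) 0| := by
          rw [max_comm 0 (min 1 b), max_comm 0 (min 1 a)]
      _ ≤ |min 1 b - min 1 a| := abs_max_sub_max_le_abs _ _ _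
      _ ≤ max |1 - 1| |b - a| := abs_min_sub_min_le_max _ _ _ _
      _ = |b - a| := by rw [sub_self, abs_zero]; exact max_eq_right (abs_nonneg _)
  have hunif : UniformContinuous w := by
    refine (LipschitzWith.of_dist_le_mul (K := ⟨C, hC.le⟩) ?_).uniformContinuous
    intro a b
    rw [hw a b]
    have hd : dist a b = |(b : ℝ) - (a : ℝ)| := by
      rw [Rat.dist_eq, abs_sub_comm]
    rw [hd]
    have : |((clamp b : ℚ) : ℝ) - ((clamp a : ℚ) : ℝ)| ≤ |(b : ℝ) - (a : ℝ)| := by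
      have := hclamplip a b
      have h' : |((clamp b - clamp a : ℚ) : ℝ)| ≤ |((b - a : ℚ) : ℝ)| := by
        rw [← Rat.cast_abs, ← Rat.cast_abs]
        exact_mod_cast this
      push_cast at h'
      exact h'
    calc |((clamp b : ℚ) : ℝ) - ((clamp a : ℚ) : ℝ)| * C ≤ |(b : ℝ) - (a : ℝ)| * C :=
          mul_le_mul_of_nonneg_right this hC.le
      _ = (⟨C, hC.le⟩ : ℝ≥0) * |(b : ℝ) - (a : ℝ)| := by
          rw [mul_comm]
  -- extension to the reals
  set ui := Rat.isUniformEmbedding_coe_real.isUniformInducing with huidef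
  set γ : ℝ → X := (ui.isDenseInducing Rat.denseRange_cast).extend w with hγdef
  have hγw : ∀ a : ℚ, γ ((a : ℚ) : ℝ) = w a := fun a =>
    uniformly_extend_of_ind ui Rat.denseRange_cast hunif a
  have hγc : Continuous γ :=
    (uniformContinuous_uniformly_extend ui Rat.denseRange_cast hunif).continuous
  -- key identity
  have hkey : ∀ s t : ℝ, dist (γ s) (γ t) = |max 0 (min 1 t) - max 0 (min 1 s)| * C := by
    have hdense : Dense (range (fun pq : ℚ × ℚ => (((pq.1 : ℚ) : ℝ), ((pq.2 : ℚ) : ℝ)))) := by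
      have := (Rat.denseRange_cast (𝕜 := ℝ)).prodMap (Rat.denseRange_cast (𝕜 := ℝ))
      exact this
    have hc1 : Continuous (fun p : ℝ × ℝ => dist (γ p.1) (γ p.2)) :=
      (hγc.comp continuous_fst).dist (hγc.comp continuous_snd)
    have hc2 : Continuous (fun p : ℝ × ℝ => |max 0 (min 1 p.2) - max 0 (min 1 p.1)| * C) := by
      refine Continuous.mul ?_ continuous_const
      exact ((continuous_const.max (continuous_const.min continuous_snd)).sub
        (continuous_const.max (continuous_const.min continuous_fst))).abs
    have heqon : EqOn (fun p : ℝ × ℝ => dist (γ p.1) (γ p.2))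
        (fun p : ℝ × ℝ => |max 0 (min 1 p.2) - max 0 (min 1 p.1)| * C)
        (range (fun pq : ℚ × ℚ => (((pq.1 : ℚ) : ℝ), ((pq.2 : ℚ) : ℝ)))) := by
      rintro p ⟨⟨a, b⟩, rfl⟩
      show dist (γ (a : ℝ)) (γ (b : ℝ)) = |max 0 (min 1 (b : ℝ)) - max 0 (min 1 (a : ℝ))| * C
      rw [hγw a, hγw b, hw a b]
      simp only [hclampdef]
      push_cast
      ring
    have heq := hc1.ext_on hdense hc2 heqon
    intro s t
    exact congrFun heq (s, t)
  -- endpoints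
  have hu_eq : ∀ n m : ℕ, e n = e m → u n = u m := by
    intro n m hnm
    have := h1 n m
    rw [hnm, sub_self, abs_zero, zero_mul] at this
    exact dist_eq_zero.1 this
  have hclamp0 : clamp 0 = 0 := hclampid 0 ⟨le_rfl, zero_le_one⟩
  have hclamp1 : clamp 1 = 1 := hclampid 1 ⟨zero_le_one, le_rfl⟩
  have hγ0 : γ 0 = u 0 := by
    have : γ (((0 : ℚ) : ℝ)) = w 0 := hγw 0
    rw [Rat.cast_zero] at this
    rw [this]
    simp only [hwdef, hclamp0]
    exact hu_eq _ _ (by rw [hidxspec 0 ⟨le_rfl, zero_le_one⟩, he0])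
  have hγ1 : γ 1 = u 1 := by
    have : γ (((1 : ℚ) : ℝ)) = w 1 := hγw 1
    rw [Rat.cast_one] at this
    rw [this]
    simp only [hwdef, hclamp1]
    exact hu_eq _ _ (by rw [hidxspec 1 ⟨zero_le_one, le_rfl⟩, he1])
  have hγ01 : dist (γ 0) (γ 1) = C := by rw [hγ0, hγ1]
  have hγ0x : γ 0 = x := hγ0.trans h2
  have hgeod : IsGeodesicSeg γ := by
    intro s hs t ht
    rw [hkey s t, hγ01]
    congr 2
    rw [min_eq_right ht.2, max_eq_right ht.1, min_eq_right hs.2, max_eq_right hs.1]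
  have hne01 : γ 0 ≠ γ 1 := by
    intro h
    have hc0 : C = 0 := by rw [← hγ01, dist_eq_zero.2 h]
    exact hC.ne' hc0
  -- bound on the interval
  set δ' : ℝ := min (δ : ℝ) 1 with hδ'def
  have hδ'pos : 0 < δ' := lt_min (by exact_mod_cast hδ) one_pos
  have hδ'le1 : δ' ≤ 1 := min_le_right _ _
  have hδ'leδ : δ' ≤ (δ : ℝ) := min_le_left _ _
  have hA : ∀ s ∈ Set.Ioo (0:ℝ) δ', (q : ℝ) * dist (γ s) x ≤ max (f (γ s) - f x) 0 := by
    have hclosed : IsClosed {s : ℝ | (q : ℝ) * dist (γ s) x ≤ max (f (γ s) - f x) 0} :=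
      isClosed_le (continuous_const.mul (hγc.dist continuous_const))
        (((hf.comp hγc).sub continuous_const).max continuous_const)
    have hsub : Set.Ioo (0:ℝ) δ' ∩ range ((↑) : ℚ → ℝ)
        ⊆ {s : ℝ | (q : ℝ) * dist (γ s) x ≤ max (f (γ s) - f x) 0} := by
      rintro s ⟨hs, a, rfl⟩
      have ha0 : (0 : ℚ) < a := by exact_mod_cast hs.1
      have ha1 : (a : ℝ) ≤ 1 := le_of_lt (lt_of_lt_of_le hs.2 hδ'le1)
      have haI : a ∈ Set.Icc (0:ℚ) 1 := ⟨ha0.le, by exact_mod_cast ha1⟩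
      have hγa : γ ((a : ℚ) : ℝ) = u (idx a) := by
        rw [hγw a]
        simp only [hwdef, hclampid a haI]
      have hea : e (idx a) = a := hidxspec a haI
      have h4' := h4 (idx a) (by rw [hea]; exact_mod_cast ha0)
        (by rw [hea]; exact lt_of_lt_of_le hs.2 hδ'leδ)
      rw [mem_setOf_eq, hγa]
      exact h4'
    intro s hs
    have hdense : Set.Ioo (0:ℝ) δ' ⊆ closure (Set.Ioo (0:ℝ) δ' ∩ range ((↑) : ℚ → ℝ)) := by
      intro z hz
      have : Dense (range ((↑) : ℚ → ℝ)) := Rat.denseRange_cast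
      exact this.open_subset_closure_inter isOpen_Ioo hz
    have := hdense hs
    have := (closure_mono hsub) this
    rwa [hclosed.closure_eq] at this
  have hdistC : ∀ s ∈ Set.Ioo (0:ℝ) δ', dist (γ s) x = s * C := by
    intro s hs
    rw [← hγ0x]
    have := hgeod s ⟨hs.1.le, lt_of_lt_of_le hs.2 hδ'le1 |>.le⟩ 0 ⟨le_rfl, zero_le_one⟩
    rw [this, hγ01, zero_sub, abs_neg, abs_of_nonneg hs.1.le]
  -- liminf bound
  have hbound : ∀ᶠ s in nhdsWithin (0:ℝ) (Set.Ioi 0),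
      ENNReal.ofReal q ≤ ENNReal.ofReal (max (f (γ s) - f x) 0 / dist (γ s) x) := by
    filter_upwards [Ioo_mem_nhdsGT_of_mem (show (0:ℝ) ∈ Set.Ico 0 δ' from ⟨le_rfl, hδ'pos⟩)]
      with s hs
    have hd : 0 < dist (γ s) x := by
      rw [hdistC s hs]
      exact mul_pos hs.1 hC
    apply ENNReal.ofReal_le_ofReal
    rw [le_div_iff₀ hd]
    exact hA s hs
  have hlim : ENNReal.ofReal q ≤
      Filter.liminf (fun s => ENNReal.ofReal (max (f (γ s) - f x) 0 / dist (γ s) x))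
        (nhdsWithin (0:ℝ) (Set.Ioi 0)) :=
    le_liminf_of_le (by isBoundedDefault) hbound
  refine le_trans hlim ?_
  exact le_iSup₂_of_le γ ⟨hgeod, hγ0x, hne01⟩ le_rfl

lemma slope_lt_mem_geoF {f : X → ℝ} {e : ℕ → ℚ}
    (he0 : e 0 = 0) (he1 : e 1 = 1) (hemem : ∀ n, e n ∈ Set.Icc (0:ℚ) 1)
    {T : ℝ≥0∞} {x : X} (hx : T < geoSlope f x) :
    ∃ q δ r : ℚ, T < ENNReal.ofReal q ∧ 0 < δ ∧ 0 < r ∧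
      ∃ u : ℕ → X, (x, u) ∈ geoF f e q δ r := by
  rw [geoSlope] at hx
  rw [lt_iSup_iff] at hx
  obtain ⟨γ, hx⟩ := hx
  rw [lt_iSup_iff] at hx
  obtain ⟨⟨hgeod, hγ0, hne⟩, hlim⟩ := hx
  obtain ⟨q, hq0, hq1, hq2⟩ := ENNReal.lt_iff_exists_rat_btwn.1 hlim
  have hofReal : (Real.toNNReal (q : ℝ) : ℝ≥0∞) = ENNReal.ofReal (q : ℝ) := rfl
  have hev : ∀ᶠ s in nhdsWithin (0:ℝ) (Set.Ioi 0),
      (Real.toNNReal (q : ℝ) : ℝ≥0∞)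
        < ENNReal.ofReal (max (f (γ s) - f x) 0 / dist (γ s) x) :=
    Filter.eventually_lt_of_lt_liminf hq2
  obtain ⟨ε, hε, hIoo⟩ := mem_nhdsGT_iff_exists_Ioo_subset.1 hev
  obtain ⟨δ, hδ1, hδ2⟩ := exists_rat_btwn (show (0:ℝ) < ε from hε)
  have hdistpos : 0 < dist (γ 0) (γ 1) := dist_pos.2 hne
  obtain ⟨r, hr1, hr2⟩ := exists_rat_btwn hdistpos
  have hδq : (0:ℚ) < δ := by exact_mod_cast hδ1
  have hrq : (0:ℚ) < r := by exact_mod_cast hr1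
  refine ⟨q, δ, r, by rwa [hofReal] at hq1, hδq, hrq, fun n => γ ((e n : ℚ) : ℝ), ?_⟩
  have hu0 : γ (((e 0 : ℚ) : ℝ)) = γ 0 := by rw [he0]; norm_num
  have hu1 : γ (((e 1 : ℚ) : ℝ)) = γ 1 := by rw [he1]; norm_num
  have hmem : ∀ n, ((e n : ℚ) : ℝ) ∈ Set.Icc (0:ℝ) 1 := by
    intro n
    obtain ⟨hn0, hn1⟩ := hemem n
    exact ⟨by exact_mod_cast hn0, by exact_mod_cast hn1⟩
  refine ⟨?_, ?_, ?_, ?_⟩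
  · intro n m
    simp only
    rw [hu0, hu1]
    exact hgeod _ (hmem n) _ (hmem m)
  · simp only
    rw [hu0, hγ0]
  · simp only
    rw [hu0, hu1]
    exact hr2.le
  · intro n hn0 hnδ
    simp only
    set s : ℝ := ((e n : ℚ) : ℝ) with hsdef
    have hsIoo : s ∈ Set.Ioo (0:ℝ) ε := ⟨hn0, lt_trans hnδ hδ2⟩
    have hlt := hIoo hsIoo
    rw [mem_setOf_eq] at hlt
    have hd : 0 < dist (γ s) x := by
      rw [← hγ0]
      have := hgeod s (hmem n) 0 ⟨le_rfl, zero_le_one⟩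
      rw [this, zero_sub, abs_neg, abs_of_nonneg (hmem n).1]
      exact mul_pos hn0 hdistpos
    have hq0' : (0:ℝ) ≤ (q:ℝ) := by exact_mod_cast hq0
    have : (q : ℝ) < max (f (γ s) - f x) 0 / dist (γ s) x := by
      rw [hofReal] at hlt
      exact (ENNReal.ofReal_lt_ofReal_iff_of_nonneg hq0').1 hlt
    rw [lt_div_iff₀ hd] at this
    exact this.le

/-- The lower ascending slope along geodesics of a continuous function on a complete
separable metric space is universally measurable: every superlevel set is analytic
(Suslin), hence null-measurable with respect to every finite Borel measure. -/
theorem geoSlope_universally_measurable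
    [CompleteSpace X] [TopologicalSpace.SeparableSpace X]
    [MeasurableSpace X] [BorelSpace X]
    (f : X → ℝ) (hf : Continuous f) :
    ∀ T : ℝ≥0∞,
      MeasureTheory.AnalyticSet {x : X | T < geoSlope f x} ∧
      ∀ μ : Measure X, IsFiniteMeasure μ →
        MeasureTheory.NullMeasurableSet {x : X | T < geoSlope f x} μ := by
  intro T
  obtain ⟨e, he0, he1, hemem, hesurj⟩ := geoSlope_exists_enum
  have hseteq : {x : X | T < geoSlope f x} =
      ⋃ i : {v : ℚ × ℚ × ℚ // T < ENNReal.ofReal v.1 ∧ 0 < v.2.1 ∧ 0 < v.2.2},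
        Prod.fst '' geoF f e i.1.1 i.1.2.1 i.1.2.2 := by
    ext x
    simp only [mem_setOf_eq, mem_iUnion]
    constructor
    · intro hx
      obtain ⟨q, δ, r, hq, hδ, hr, u, hu⟩ := slope_lt_mem_geoF he0 he1 hemem hx
      exact ⟨⟨(q, δ, r), hq, hδ, hr⟩, (x, u), hu, rfl⟩
    · rintro ⟨⟨⟨q, δ, r⟩, hq, hδ, hr⟩, ⟨x', u⟩, hp, rfl⟩
      have hq0 : (0:ℚ) < q := by
        have h0 : (0:ℝ≥0∞) < ENNReal.ofReal (q:ℝ) := lt_of_le_of_lt (zero_le (a := T)) hq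
        exact_mod_cast ENNReal.ofReal_pos.1 h0
      exact lt_of_lt_of_le hq (geoF_slope_le hf he0 he1 hemem hesurj hq0 hδ hr hp)
  have hanalytic : MeasureTheory.AnalyticSet {x : X | T < geoSlope f x} := by
    rw [hseteq]
    refine MeasureTheory.AnalyticSet.iUnion fun i => ?_
    exact ((geoF_closed hf e _ _ _).analyticSet).image_of_continuous continuous_fst
  refine ⟨hanalytic, fun μ hμ => ?_⟩
  exact cap_nullMeasurable hanalytic μ
end

section
/- Let (X,d) be a complete separable geodesic metric space and f : X → ℝ Lipschitz. Then for every constant-speed geodesic γ : [0,1] → X one has |f(γ_0) − f(γ_1)| ≤ l(γ) · ∫₀¹ |∇g⁺f|(γ_s) ds, i.e., the lower ascending slope along geodesics is an upper gradient of f along geodesics. -/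
open Filter Set Metric MeasureTheory Topology
open scoped ENNReal NNReal

variable {X : Type*} [MetricSpace X]

/-- If along some admissible geodesic the slope quotient converges to `c`, then
`ofReal c` bounds the geodesic slope from below. -/
lemma geoSlope_ge_of_tendsto {f : X → ℝ} {x : X} {δ : ℝ → X}
    (hδ : IsGeodesicSeg δ) (h0 : δ 0 = x) (hne : δ 0 ≠ δ 1) {c : ℝ}
    (hc : Filter.Tendsto (fun t => max (f (δ t) - f x) 0 / dist (δ t) x)
      (nhdsWithin (0:ℝ) (Set.Ioi 0)) (nhds c)) :
    ENNReal.ofReal c ≤ geoSlope f x := by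
  have hmem : δ ∈ {γ : ℝ → X | IsGeodesicSeg γ ∧ γ 0 = x ∧ γ 0 ≠ γ 1} := ⟨hδ, h0, hne⟩
  have hlim : Filter.liminf
      (fun s => ENNReal.ofReal (max (f (δ s) - f x) 0 / dist (δ s) x))
      (nhdsWithin (0:ℝ) (Set.Ioi 0)) = ENNReal.ofReal c :=
    ((ENNReal.continuous_ofReal.tendsto c).comp hc).liminf_eq
  calc ENNReal.ofReal c = _ := hlim.symm
    _ ≤ geoSlope f x :=
      le_iSup₂ (f := fun γ' (_ : γ' ∈ {γ : ℝ → X | IsGeodesicSeg γ ∧ γ 0 = x ∧ γ 0 ≠ γ 1}) =>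
        Filter.liminf (fun s => ENNReal.ofReal (max (f (γ' s) - f x) 0 / dist (γ' s) x))
          (nhdsWithin (0:ℝ) (Set.Ioi 0))) δ hmem

/-- Forward slope bound: if `g` agrees with `f ∘ γ` on `[0,1]` and has derivative `d`
at an interior point `s`, then `(d)⁺ ≤ L ⋅ |∇g⁺f|(γ s)`. -/
lemma forward_slope_bound {f : X → ℝ} {γ : ℝ → X} (hγ : IsGeodesicSeg γ)
    (hL : 0 < dist (γ 0) (γ 1)) {g : ℝ → ℝ} (hg : ∀ t ∈ Set.Icc (0:ℝ) 1, g t = f (γ t))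
    {s : ℝ} (hs : s ∈ Set.Ioo (0:ℝ) 1) {d : ℝ} (hd : HasDerivAt g d s) :
    ENNReal.ofReal (max d 0) ≤ ENNReal.ofReal (dist (γ 0) (γ 1)) * geoSlope f (γ s) := by
  set L : ℝ := dist (γ 0) (γ 1) with hLdef
  obtain ⟨hs0, hs1⟩ := hs
  have h1s : (0:ℝ) < 1 - s := by linarith
  set u : ℝ → ℝ := fun t => s + t * (1 - s) with hudef
  have hu_mem : ∀ t ∈ Set.Icc (0:ℝ) 1, u t ∈ Set.Icc (0:ℝ) 1 := by
    intro t ht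
    simp only [hudef]
    constructor
    · nlinarith [mul_nonneg ht.1 h1s.le]
    · nlinarith [mul_le_mul_of_nonneg_right ht.2 h1s.le]
  set δ : ℝ → X := fun t => γ (u t) with hδdef
  have hu0 : u 0 = s := by simp [hudef]
  have hu1 : u 1 = 1 := by simp [hudef]
  have hδ0 : δ 0 = γ s := by rw [hδdef]; simp [hu0]
  have hδ1 : δ 1 = γ 1 := by rw [hδdef]; simp [hu1]
  have hsI : s ∈ Set.Icc (0:ℝ) 1 := ⟨hs0.le, hs1.le⟩
  have hdist01 : dist (δ 0) (δ 1) = (1 - s) * L := by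
    rw [hδ0, hδ1, hγ s hsI 1 (by norm_num)]
    rw [abs_of_nonneg (by linarith : (0:ℝ) ≤ 1 - s)]
  have hδgeo : IsGeodesicSeg δ := by
    intro a ha b hb
    have h1 : dist (δ a) (δ b) = |u b - u a| * L := hγ _ (hu_mem a ha) _ (hu_mem b hb)
    have h2 : |u b - u a| = |b - a| * (1 - s) := by
      have : u b - u a = (b - a) * (1 - s) := by simp [hudef]; ring
      rw [this, abs_mul, abs_of_nonneg h1s.le]
    rw [h1, h2, hdist01]
    ring
  have hδne : δ 0 ≠ δ 1 := by
    have : 0 < dist (δ 0) (δ 1) := by rw [hdist01]; positivity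
    exact fun h => by simp [h] at this
  -- distance from δ t to the base point
  have hdist : ∀ t ∈ Set.Ioc (0:ℝ) 1, dist (δ t) (γ s) = t * (1 - s) * L := by
    intro t ht
    have h1 : dist (γ s) (δ t) = |u t - s| * L := hγ s hsI _ (hu_mem t ⟨ht.1.le, ht.2⟩)
    have h2 : |u t - s| = t * (1 - s) := by
      have : u t - s = t * (1 - s) := by simp [hudef]
      rw [this, abs_of_nonneg (by nlinarith [ht.1] : (0:ℝ) ≤ t * (1 - s))]
    rw [dist_comm, h1, h2]
  -- the slope quotient converges
  have hslope : Filter.Tendsto (slope g s) (nhdsWithin s {s}ᶜ) (nhds d) :=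
    hasDerivAt_iff_tendsto_slope.1 hd
  have hu_tendsto : Filter.Tendsto u (nhdsWithin (0:ℝ) (Set.Ioi 0)) (nhdsWithin s {s}ᶜ) := by
    rw [tendsto_nhdsWithin_iff]
    constructor
    · have : Filter.Tendsto u (nhds 0) (nhds (u 0)) :=
        (continuous_const.add (continuous_id.mul continuous_const)).tendsto 0
      rw [hu0] at this
      exact this.mono_left nhdsWithin_le_nhds
    · filter_upwards [self_mem_nhdsWithin] with t ht
      have : s < u t := by
        simp only [hudef]
        nlinarith [mem_Ioi.1 ht]
      exact Set.mem_compl_singleton_iff.2 this.ne'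
  have hG : Filter.Tendsto (fun t => max (slope g s (u t)) 0 / L)
      (nhdsWithin (0:ℝ) (Set.Ioi 0)) (nhds (max d 0 / L)) :=
    (((hslope.comp hu_tendsto).max tendsto_const_nhds).div_const L)
  have hEq : ∀ᶠ t in nhdsWithin (0:ℝ) (Set.Ioi 0),
      max (f (δ t) - f (γ s)) 0 / dist (δ t) (γ s) = max (slope g s (u t)) 0 / L := by
    filter_upwards [Ioc_mem_nhdsGT (zero_lt_one : (0:ℝ) < 1)] with t ht
    have htp : 0 < t * (1 - s) := by nlinarith [ht.1]
    have hfδ : f (δ t) = g (u t) := (hg _ (hu_mem t ⟨ht.1.le, ht.2⟩)).symm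
    have hfs : f (γ s) = g s := (hg s hsI).symm
    have hslope_eq : slope g s (u t) = (g (u t) - g s) / (t * (1 - s)) := by
      rw [slope_def_field]
      have : u t - s = t * (1 - s) := by simp [hudef]
      rw [div_eq_div_iff (by rw [this]; exact htp.ne') htp.ne', this]
    rw [hdist t ht, hfδ, hfs, hslope_eq]
    rcases le_total (g (u t) - g s) 0 with hA | hA
    · rw [max_eq_right hA, max_eq_right (div_nonpos_of_nonpos_of_nonneg hA htp.le)]
      simp
    · rw [max_eq_left hA, max_eq_left (div_nonneg hA htp.le), div_div]
  have hc : Filter.Tendsto (fun t => max (f (δ t) - f (γ s)) 0 / dist (δ t) (γ s))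
      (nhdsWithin (0:ℝ) (Set.Ioi 0)) (nhds (max d 0 / L)) :=
    hG.congr' (by filter_upwards [hEq] with t ht using ht.symm)
  have hmain : ENNReal.ofReal (max d 0 / L) ≤ geoSlope f (γ s) :=
    geoSlope_ge_of_tendsto hδgeo hδ0 hδne hc
  calc ENNReal.ofReal (max d 0) = ENNReal.ofReal (L * (max d 0 / L)) := by
        rw [mul_div_cancel₀ _ hL.ne']
    _ = ENNReal.ofReal L * ENNReal.ofReal (max d 0 / L) := ENNReal.ofReal_mul hL.le
    _ ≤ ENNReal.ofReal L * geoSlope f (γ s) := mul_le_mul_right hmain _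

/-- For a Lipschitz function on a complete separable geodesic metric space, the lower
ascending slope along geodesics is an upper gradient along geodesics:
`|f(γ₀) - f(γ₁)| ≤ l(γ) ∫₀¹ |∇g⁺f|(γ_s) ds` for every constant-speed geodesic `γ`. -/
theorem geoSlope_upperGradient_along_geodesics
    [CompleteSpace X] [TopologicalSpace.SeparableSpace X]
    (hgeo : ∀ x y : X, ∃ γ : ℝ → X, IsGeodesicSeg γ ∧ γ 0 = x ∧ γ 1 = y)
    (f : X → ℝ) (K : ℝ≥0) (hf : LipschitzWith K f)
    (γ : ℝ → X) (hγ : IsGeodesicSeg γ) :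
    ENNReal.ofReal |f (γ 0) - f (γ 1)| ≤
      ENNReal.ofReal (dist (γ 0) (γ 1)) * ∫⁻ s in Set.Icc (0:ℝ) 1, geoSlope f (γ s) := by
  set L : ℝ := dist (γ 0) (γ 1) with hLdef
  rcases eq_or_lt_of_le (dist_nonneg : (0:ℝ) ≤ L) with hL0 | hL
  · -- degenerate case : the endpoints coincide
    have : γ 0 = γ 1 := by rw [← dist_le_zero]; rw [← hL0]
    simp [this]
  -- the clamped parametrization
  set proj : ℝ → ℝ := fun s => max 0 (min 1 s) with hprojdef
  have hproj_mem : ∀ s, proj s ∈ Icc (0:ℝ) 1 :=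
    fun s => ⟨le_max_left _ _, max_le (by norm_num) (min_le_left _ _)⟩
  have hproj_id : ∀ s ∈ Icc (0:ℝ) 1, proj s = s := by
    intro s hs
    simp only [hprojdef]
    rw [min_eq_right hs.2, max_eq_right hs.1]
  have hproj_lip : LipschitzWith 1 proj := (LipschitzWith.id.const_min 1).const_max 0
  set g : ℝ → ℝ := fun s => f (γ (proj s)) with hgdef
  have hgf : ∀ t ∈ Icc (0:ℝ) 1, g t = f (γ t) := by
    intro t ht; rw [hgdef]; simp only []; rw [hproj_id t ht]
  set M : ℝ := (K : ℝ) * L with hMdef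
  have hM0 : 0 ≤ M := mul_nonneg K.coe_nonneg dist_nonneg
  have hg_lip : ∀ s t : ℝ, |g s - g t| ≤ M * |s - t| := by
    intro s t
    have h1 : dist (g s) (g t) ≤ K * dist (γ (proj s)) (γ (proj t)) := hf.dist_le_mul _ _
    have h2 : dist (γ (proj s)) (γ (proj t)) = |proj t - proj s| * L :=
      hγ _ (hproj_mem s) _ (hproj_mem t)
    have h3 : |proj t - proj s| ≤ |t - s| := by
      have := hproj_lip.dist_le_mul t s
      simpa [Real.dist_eq] using this
    calc |g s - g t| = dist (g s) (g t) := (Real.dist_eq _ _).symm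
      _ ≤ K * (|proj t - proj s| * L) := by rw [← h2]; exact h1
      _ ≤ K * (|t - s| * L) := by
          apply mul_le_mul_of_nonneg_left _ K.coe_nonneg
          exact mul_le_mul_of_nonneg_right h3 dist_nonneg
      _ = M * |s - t| := by rw [abs_sub_comm t s]; ring
  have hg_cont : Continuous g := by
    refine LipschitzWith.continuous (K := Real.toNNReal M) ?_
    apply LipschitzWith.of_dist_le_mul
    intro s t
    rw [Real.dist_eq, Real.dist_eq]
    calc |g s - g t| ≤ M * |s - t| := hg_lip s t
      _ ≤ Real.toNNReal M * |s - t| :=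
          mul_le_mul_of_nonneg_right (Real.le_coe_toNNReal M) (abs_nonneg _)
  set h : ℝ → ℝ := fun s => g s + M * s with hhdef
  have hh_mono : Monotone h := by
    intro s t hst
    have habs : g s - g t ≤ M * (t - s) := by
      have h1 : g s - g t ≤ |g s - g t| := le_abs_self _
      have h2 : |s - t| = t - s := by rw [abs_sub_comm]; exact abs_of_nonneg (by linarith)
      calc g s - g t ≤ M * |s - t| := h1.trans (hg_lip s t)
        _ = M * (t - s) := by rw [h2]
    simp only [hhdef]
    nlinarith
  have hh_cont : Continuous h := hg_cont.add (continuous_const.mul continuous_id)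
  set S := hh_mono.stieltjesFunction with hSdef
  have hS : ∀ x, S x = h x := by
    intro x
    rw [hSdef, hh_mono.stieltjesFunction_eq]
    exact rightLim_eq_of_tendsto
      ((hh_cont.tendsto x).mono_left nhdsWithin_le_nhds)
  set μ := S.measure with hμdef
  -- absolute continuity of μ with respect to Lebesgue measure
  have hk_mono : Monotone (fun x : ℝ => 2 * M * x - h x) := by
    intro s t hst
    have h1 : g t - g s ≤ |g t - g s| := le_abs_self _
    have h2 : |t - s| = t - s := abs_of_nonneg (by linarith)
    have h3 : g t - g s ≤ M * (t - s) := by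
      calc g t - g s ≤ M * |t - s| := h1.trans (hg_lip t s)
        _ = M * (t - s) := by rw [h2]
    simp only [hhdef]
    nlinarith
  set T := hk_mono.stieltjesFunction with hTdef
  have hT : ∀ x, T x = 2 * M * x - h x := by
    intro x
    rw [hTdef, hk_mono.stieltjesFunction_eq]
    exact rightLim_eq_of_tendsto
      ((((continuous_const.mul continuous_id).sub hh_cont).tendsto x).mono_left
        nhdsWithin_le_nhds)
  have hle : μ ≤ (ENNReal.ofReal (2 * M)) • (volume : Measure ℝ) := by
    have hsum : μ + T.measure = (ENNReal.ofReal (2 * M)) • (volume : Measure ℝ) := by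
      refine MeasureTheory.Measure.ext_of_Ioc' _ _ (fun a b hab => ?_) (fun a b hab => ?_)
      · rw [Measure.add_apply, hμdef, StieltjesFunction.measure_Ioc,
          StieltjesFunction.measure_Ioc]
        exact (ENNReal.add_lt_top.2 ⟨ENNReal.ofReal_lt_top, ENNReal.ofReal_lt_top⟩).ne
      rw [Measure.add_apply, hμdef, StieltjesFunction.measure_Ioc,
        StieltjesFunction.measure_Ioc, Measure.smul_apply, Real.volume_Ioc, smul_eq_mul,
        ← ENNReal.ofReal_mul (by linarith)]
      rw [hS, hS, hT, hT]
      have hba : h a ≤ h b := hh_mono hab.le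
      have hba2 : 2 * M * a - h a ≤ 2 * M * b - h b := hk_mono hab.le
      rw [← ENNReal.ofReal_add (by linarith) (by linarith)]
      ring_nf
    rw [← hsum]
    exact Measure.le_add_right le_rfl
  have hac : μ ≪ (volume : Measure ℝ) := Measure.absolutelyContinuous_of_le_smul hle
  -- the density
  set D : ℝ → ℝ≥0∞ := μ.rnDeriv volume with hDdef
  have hD_meas : Measurable D := Measure.measurable_rnDeriv _ _
  have hD_lint : ∫⁻ x in Ioc (0:ℝ) 1, D x = μ (Ioc 0 1) :=
    Measure.setLIntegral_rnDeriv hac _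
  have hμIoc : μ (Ioc (0:ℝ) 1) = ENNReal.ofReal (h 1 - h 0) := by
    rw [hμdef, StieltjesFunction.measure_Ioc, hS, hS]
  have hh01 : h 0 ≤ h 1 := hh_mono (by norm_num)
  set φ : ℝ → ℝ := fun x => (D x).toReal with hφdef
  have hφ_int : IntegrableOn φ (Ioc (0:ℝ) 1) volume := by
    refine integrable_toReal_of_lintegral_ne_top hD_meas.aemeasurable.restrict ?_
    rw [hD_lint, hμIoc]
    exact ENNReal.ofReal_ne_top
  have hφ_integral : ∫ x in Ioc (0:ℝ) 1, φ x = h 1 - h 0 := by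
    have := integral_toReal (μ := volume.restrict (Ioc (0:ℝ) 1))
      hD_meas.aemeasurable (ae_restrict_of_ae (Measure.rnDeriv_lt_top μ volume))
    rw [hφdef]
    rw [this, hD_lint, hμIoc, ENNReal.toReal_ofReal (by linarith)]
  -- a.e. differentiability of g
  have hderiv : ∀ᵐ x ∂(volume : Measure ℝ), HasDerivAt g (φ x - M) x := by
    filter_upwards [hh_mono.ae_hasDerivAt] with x hx
    have h2 : HasDerivAt (fun y : ℝ => M * y) M x := by
      simpa using (hasDerivAt_id x).const_mul M
    have h3 : HasDerivAt (fun y => h y - M * y) (φ x - M) x := hx.sub h2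
    have h4 : (fun y => h y - M * y) = g := by
      funext y; simp only [hhdef]; ring
    rwa [h4] at h3
  -- pointwise slope bound at interior points
  have key : ∀ x ∈ Ioo (0:ℝ) 1, ∀ d : ℝ, HasDerivAt g d x →
      ENNReal.ofReal |d| ≤ ENNReal.ofReal L * geoSlope f (γ x) := by
    intro s hs d hd
    rcases le_total 0 d with hd0 | hd0
    · have h1 : |d| = max d 0 := by rw [abs_of_nonneg hd0, max_eq_left hd0]
      rw [h1]
      exact forward_slope_bound hγ hL hgf hs hd
    · -- use the reversed geodesic
      set γ' : ℝ → X := fun t => γ (1 - t) with hγ'def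
      have hγ'0 : γ' 0 = γ 1 := by rw [hγ'def]; norm_num
      have hγ'1 : γ' 1 = γ 0 := by rw [hγ'def]; norm_num
      have hL' : dist (γ' 0) (γ' 1) = L := by rw [hγ'0, hγ'1, dist_comm]
      have hγ'geo : IsGeodesicSeg γ' := by
        intro a ha b hb
        have ha' : 1 - a ∈ Icc (0:ℝ) 1 := ⟨by linarith [ha.2], by linarith [ha.1]⟩
        have hb' : 1 - b ∈ Icc (0:ℝ) 1 := ⟨by linarith [hb.2], by linarith [hb.1]⟩
        have h1 := hγ _ ha' _ hb'
        have e0 : (1:ℝ) - 0 = 1 := by norm_num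
        have e1 : (1:ℝ) - 1 = 0 := by norm_num
        simp only [hγ'def, e0, e1]
        rw [h1, dist_comm (γ 1) (γ 0), show (1:ℝ) - b - (1 - a) = -(b - a) by ring, abs_neg]
      set g' : ℝ → ℝ := fun t => g (1 - t) with hg'def
      have hg'f : ∀ t ∈ Icc (0:ℝ) 1, g' t = f (γ' t) := by
        intro t ht
        rw [hg'def, hγ'def]
        exact hgf (1 - t) ⟨by linarith [ht.2], by linarith [ht.1]⟩
      have hs' : 1 - s ∈ Ioo (0:ℝ) 1 := ⟨by linarith [hs.2], by linarith [hs.1]⟩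
      have hd' : HasDerivAt g' (-d) (1 - s) := by
        have hinner : HasDerivAt (fun t : ℝ => 1 - t) (-1) (1 - s) := by
          simpa using (hasDerivAt_id' (1 - s)).const_sub (1:ℝ)
        have hdg : HasDerivAt g d (1 - (1 - s)) := by
          rw [show (1:ℝ) - (1 - s) = s by ring]; exact hd
        have := hdg.comp (1 - s) hinner
        simpa [hg'def, mul_comm, Function.comp_def] using this
      have := forward_slope_bound hγ'geo (hL' ▸ hL) hg'f hs' hd'
      rw [hL'] at this
      have hγ's : γ' (1 - s) = γ s := by rw [hγ'def]; norm_num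
      rw [hγ's] at this
      have h1 : |d| = max (-d) 0 := by
        rw [abs_of_nonpos hd0, max_eq_left (by linarith)]
      rw [h1]
      exact this
  -- the a.e. bound on the integrand over (0,1]
  have hne1 : ∀ᵐ x ∂(volume : Measure ℝ), x ≠ (1:ℝ) := by
    rw [ae_iff]
    have : {a : ℝ | ¬a ≠ 1} = {1} := by ext a; simp
    rw [this]
    exact Real.volume_singleton
  have hkey_ae : ∀ᵐ x ∂((volume : Measure ℝ).restrict (Ioc (0:ℝ) 1)),
      ENNReal.ofReal |φ x - M| ≤ ENNReal.ofReal L * geoSlope f (γ x) := by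
    filter_upwards [ae_restrict_mem measurableSet_Ioc, ae_restrict_of_ae hderiv,
      ae_restrict_of_ae hne1] with x hx hdx hx1
    exact key x ⟨hx.1, lt_of_le_of_ne hx.2 hx1⟩ _ hdx
  -- putting everything together
  have hg0 : g 0 = f (γ 0) := hgf 0 (by norm_num)
  have hg1 : g 1 = f (γ 1) := hgf 1 (by norm_num)
  have hconst_int : IntegrableOn (fun _ : ℝ => M) (Ioc (0:ℝ) 1) volume := by
    apply integrableOn_const
    · rw [Real.volume_Ioc]
      exact ENNReal.ofReal_ne_top
    · exact enorm_ne_top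
  have hψ_int : IntegrableOn (fun x => φ x - M) (Ioc (0:ℝ) 1) volume := hφ_int.sub hconst_int
  have hψ_integral : ∫ x in Ioc (0:ℝ) 1, (φ x - M) = g 1 - g 0 := by
    rw [integral_sub hφ_int hconst_int, hφ_integral, setIntegral_const]
    rw [Real.volume_real_Ioc]
    simp only [hhdef]
    norm_num
    ring
  calc ENNReal.ofReal |f (γ 0) - f (γ 1)|
      = ENNReal.ofReal |∫ x in Ioc (0:ℝ) 1, (φ x - M)| := by
        rw [hψ_integral, ← hg0, ← hg1, abs_sub_comm]
    _ ≤ ENNReal.ofReal (∫ x in Ioc (0:ℝ) 1, |φ x - M|) := by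
        apply ENNReal.ofReal_le_ofReal
        simpa [Real.norm_eq_abs] using
          norm_integral_le_integral_norm (μ := volume.restrict (Ioc (0:ℝ) 1))
            (fun x => φ x - M)
    _ = ∫⁻ x in Ioc (0:ℝ) 1, ENNReal.ofReal |φ x - M| := by
        rw [ofReal_integral_eq_lintegral_ofReal hψ_int.abs
          (Filter.Eventually.of_forall fun x => abs_nonneg _)]
    _ ≤ ∫⁻ x in Ioc (0:ℝ) 1, ENNReal.ofReal L * geoSlope f (γ x) :=
        lintegral_mono_ae hkey_ae
    _ ≤ ∫⁻ x in Icc (0:ℝ) 1, ENNReal.ofReal L * geoSlope f (γ x) :=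
        lintegral_mono' (Measure.restrict_mono Ioc_subset_Icc_self le_rfl) le_rfl
    _ = ENNReal.ofReal L * ∫⁻ x in Icc (0:ℝ) 1, geoSlope f (γ x) :=
        lintegral_const_mul' _ _ ENNReal.ofReal_ne_top
end

section
/- Let (X,d) be a geodesic metric space, φ : X → ℝ, and γ ∈ Geo(X). If φ(γ_0) + φ^c(γ_1) = d²(γ_0,γ_1)/2 (where φ^c is the c-transform of φ for cost d²/2), then |∇g⁺φ|(γ_0) ≤ d(γ_0,γ_1); in fact even the full ascending slope satisfies |∇⁺φ|(γ_0) ≤ d(γ_0,γ_1). -/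
open Filter Set Metric MeasureTheory Topology
open scoped ENNReal NNReal

variable {X : Type*} [MetricSpace X]

/-- The ordinary ascending slope `|∇⁺ f|(x)`. -/
noncomputable def ascSlope (f : X → ℝ) (x : X) : ℝ≥0∞ :=
  Filter.limsup (fun y => ENNReal.ofReal (max (f y - f x) 0 / dist y x))
    (nhdsWithin x {x}ᶜ)

/-- The `c`-transform for the cost `c = d²/2`, valued in `ℝ ∪ {±∞}`. -/
noncomputable def cTransform (φ : X → ℝ) (x : X) : EReal :=
  ⨅ y : X, ((dist x y ^ 2 / 2 - φ y : ℝ) : EReal)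

private lemma keyDivIneq (a d v : ℝ) (ha : 0 ≤ a) (hd : 0 ≤ d)
    (hv : v ≤ a * (a + 2 * d) / 2) : max v 0 / a ≤ a / 2 + d := by
  rcases eq_or_lt_of_le ha with h | h
  · simp [← h]; positivity
  · rw [div_le_iff₀ h]
    refine max_le (hv.trans (by nlinarith)) (by positivity)

/-- If `φ(γ₀) + φ^c(γ₁) = d²(γ₀,γ₁)/2` then the ascending slope (hence also the slope
along geodesics) of `φ` at `γ₀` is at most `d(γ₀,γ₁)`. -/
theorem slope_le_of_kantorovich_eq
    (γ : ℝ → X) (hγ : IsGeodesicSeg γ) (φ : X → ℝ)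
    (heq : (φ (γ 0) : EReal) + cTransform φ (γ 1) =
      ((dist (γ 0) (γ 1) ^ 2 / 2 : ℝ) : EReal)) :
    ascSlope φ (γ 0) ≤ ENNReal.ofReal (dist (γ 0) (γ 1)) ∧
      geoSlope φ (γ 0) ≤ ENNReal.ofReal (dist (γ 0) (γ 1)) := by
  set x := γ 0 with hx
  set D := dist (γ 0) (γ 1) with hD
  have hD0 : 0 ≤ D := dist_nonneg
  -- Key inequality from the Kantorovich equality
  have key : ∀ z : X, φ z - φ x ≤ dist z x * (dist z x + 2 * D) / 2 := by
    intro z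
    have hinf : cTransform φ (γ 1) ≤ ((dist (γ 1) z ^ 2 / 2 - φ z : ℝ) : EReal) :=
      iInf_le _ z
    have h2 : (φ x : EReal) + cTransform φ (γ 1) ≤
        (φ x : EReal) + ((dist (γ 1) z ^ 2 / 2 - φ z : ℝ) : EReal) :=
      add_le_add_right hinf _
    rw [heq, ← EReal.coe_add, EReal.coe_le_coe_iff] at h2
    have htri : dist z (γ 1) ≤ dist z x + D := dist_triangle z x (γ 1)
    have hz1 : dist (γ 1) z = dist z (γ 1) := dist_comm _ _
    nlinarith [dist_nonneg (x := z) (y := x), dist_nonneg (x := z) (y := γ 1)]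
  -- pointwise bound on the difference quotient
  have hpt : ∀ y : X, ENNReal.ofReal (max (φ y - φ x) 0 / dist y x) ≤
      ENNReal.ofReal (dist y x / 2 + D) := by
    intro y
    exact ENNReal.ofReal_le_ofReal (keyDivIneq _ _ _ dist_nonneg hD0 (key y))
  have hbound : ∀ (l : Filter X) (hl : Filter.Tendsto id l (nhds x)),
      Filter.limsup (fun y => ENNReal.ofReal (dist y x / 2 + D)) l =
        ENNReal.ofReal D ∨ l = ⊥ := by
    intro l hl
    rcases l.eq_or_neBot with h | h
    · exact Or.inr h
    · left
      have hcont : Filter.Tendsto (fun y : X => ENNReal.ofReal (dist y x / 2 + D)) l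
          (nhds (ENNReal.ofReal D)) := by
        have h1 : Filter.Tendsto (fun y : X => dist y x / 2 + D) l (nhds D) := by
          have h2 : Filter.Tendsto (fun y : X => dist y x / 2 + D) l
              (nhds (dist x x / 2 + D)) :=
            ((hl.dist tendsto_const_nhds).div_const 2).add tendsto_const_nhds
          simpa using h2
        have := (ENNReal.continuous_ofReal.tendsto D).comp h1
        exact this
      exact hcont.limsup_eq
  have hasc : ascSlope φ x ≤ ENNReal.ofReal D := by
    unfold ascSlope
    have h1 : Filter.limsup
        (fun y => ENNReal.ofReal (max (φ y - φ x) 0 / dist y x))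
        (nhdsWithin x {x}ᶜ) ≤
        Filter.limsup (fun y => ENNReal.ofReal (dist y x / 2 + D))
        (nhdsWithin x {x}ᶜ) :=
      Filter.limsup_le_limsup (Filter.Eventually.of_forall hpt)
    refine h1.trans ?_
    rcases hbound (nhdsWithin x {x}ᶜ) (tendsto_id'.mpr nhdsWithin_le_nhds) with h | h
    · exact le_of_eq h
    · simp [h, Filter.limsup_bot]
  refine ⟨hasc, ?_⟩
  -- geodesic slope
  unfold geoSlope
  refine iSup₂_le fun γ' hγ' => ?_
  obtain ⟨hg, h0, hne⟩ := hγ'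
  set c := dist (γ' 0) (γ' 1) with hc
  have hdist : ∀ᶠ s in nhdsWithin (0:ℝ) (Set.Ioi 0), dist (γ' s) x = s * c := by
    filter_upwards [Filter.inter_mem (nhdsWithin_le_nhds (Ioo_mem_nhds
      (by norm_num : (-1:ℝ) < 0) one_pos)) self_mem_nhdsWithin] with s hs
    obtain ⟨hs1, hs2⟩ := hs
    have hthis := hg s ⟨le_of_lt hs2, le_of_lt hs1.2⟩ 0 ⟨le_refl _, zero_le_one⟩
    have hs0 : s ∈ Set.Ioi (0:ℝ) := hs2
    rw [Set.mem_Ioi] at hs0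
    calc dist (γ' s) x = dist (γ' s) (γ' 0) := by rw [h0]
      _ = |0 - s| * dist (γ' 0) (γ' 1) := hthis
      _ = s * c := by rw [abs_of_nonpos (by linarith)]; ring
  have hto : Filter.Tendsto (fun s => dist (γ' s) x) (nhdsWithin (0:ℝ) (Set.Ioi 0))
      (nhds 0) := by
    have h1 : Filter.Tendsto (fun s : ℝ => s * c) (nhdsWithin (0:ℝ) (Set.Ioi 0))
        (nhds 0) := by
      have h2 : Filter.Tendsto (fun s : ℝ => s * c) (nhds 0) (nhds (0 * c)) :=
        (tendsto_id.mul tendsto_const_nhds)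
      simpa using h2.mono_left nhdsWithin_le_nhds
    exact h1.congr' (hdist.mono fun s h => h.symm)
  have hlim : Filter.Tendsto (fun s => ENNReal.ofReal (dist (γ' s) x / 2 + D))
      (nhdsWithin (0:ℝ) (Set.Ioi 0)) (nhds (ENNReal.ofReal D)) := by
    have h1 : Filter.Tendsto (fun s => dist (γ' s) x / 2 + D)
        (nhdsWithin (0:ℝ) (Set.Ioi 0)) (nhds D) := by
      have := (hto.div_const 2).add_const D
      simpa using this
    have := (ENNReal.continuous_ofReal.tendsto D).comp h1
    exact this
  calc Filter.liminf (fun s => ENNReal.ofReal (max (φ (γ' s) - φ x) 0 / dist (γ' s) x))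
        (nhdsWithin (0:ℝ) (Set.Ioi 0))
      ≤ Filter.liminf (fun s => ENNReal.ofReal (dist (γ' s) x / 2 + D))
        (nhdsWithin (0:ℝ) (Set.Ioi 0)) :=
        Filter.liminf_le_liminf (Filter.Eventually.of_forall fun s => hpt (γ' s))
    _ = ENNReal.ofReal D := hlim.liminf_eq
end

section
/- Let (X,d) be a geodesic metric space, φ : X → ℝ, γ ∈ Geo(X) with φ(γ_0) + φ^c(γ_1) = d²(γ_0,γ_1)/2, and let y ∈ X, and z a point on γ with d(x,z) = d(y,x) where x = γ_0. If (φ(y) − φ(x))/d(y,x) > d(x,γ_1) − 1/n, then 0 ≤ d(y,x) + d(x,z) − d(y,z) ≤ (1 − 2(d(x,γ_1) − 1/n)/(d(x,γ_1) + d(y,γ_1)))·d(y,x). -/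
open Filter Set Metric MeasureTheory Topology
open scoped ENNReal NNReal

variable {X : Type*} [MetricSpace X]

/-- The almost-alignment estimate from the blow-up argument of Theorem 4.5. Here
`x = γ₀`, `c1 = φ^c(γ₁)` (so the stated hypotheses express the Kantorovich relations),
`z` is a point on `γ` with `d(x,z) = d(y,x)`. -/
theorem almost_alignment
    (γ : ℝ → X) (hγ : IsGeodesicSeg γ) (φ : X → ℝ) (c1 : ℝ)
    (x : X) (hx : x = γ 0)
    (heq : φ x + c1 = dist x (γ 1) ^ 2 / 2)
    (hle : ∀ w : X, φ w + c1 ≤ dist w (γ 1) ^ 2 / 2)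
    (y z : X) (hyx : 0 < dist y x)
    (hz : ∃ s ∈ Set.Icc (0:ℝ) 1, γ s = z) (hxz : dist x z = dist y x)
    (n : ℕ) (hn : 0 < n)
    (hslope : (φ y - φ x) / dist y x > dist x (γ 1) - 1 / n) :
    0 ≤ dist y x + dist x z - dist y z ∧
      dist y x + dist x z - dist y z ≤
        (1 - 2 * (dist x (γ 1) - 1 / n) / (dist x (γ 1) + dist y (γ 1))) * dist y x := by
  obtain ⟨s, hs, hsz⟩ := hz
  set r := dist y x with hr
  set D := dist x (γ 1) with hD
  set E := dist y (γ 1) with hE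
  have h0 : (0:ℝ) ∈ Set.Icc (0:ℝ) 1 := by constructor <;> norm_num
  have h1 : (1:ℝ) ∈ Set.Icc (0:ℝ) 1 := by constructor <;> norm_num
  have hxz' : dist x z = |s - 0| * dist (γ 0) (γ 1) := by
    rw [hx, ← hsz]; exact hγ 0 h0 s hs
  have hz1 : dist z (γ 1) = |1 - s| * dist (γ 0) (γ 1) := by
    rw [← hsz]; exact hγ s hs 1 h1
  have hD' : D = dist (γ 0) (γ 1) := by rw [hD, hx]
  have hsum : dist x z + dist z (γ 1) = D := by
    rw [hxz', hz1, hD', abs_of_nonneg (by linarith [hs.1] : (0:ℝ) ≤ s - 0),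
      abs_of_nonneg (by linarith [hs.2] : (0:ℝ) ≤ 1 - s)]
    ring
  have hzg : dist z (γ 1) = D - r := by rw [← hsum, hxz]; ring
  have htri2 : E ≤ dist y z + dist z (γ 1) := dist_triangle y z (γ 1)
  have htri : dist y z ≤ r + dist x z :=
    le_trans (dist_triangle y x z) (by rw [hr])
  have hEnn : (0:ℝ) ≤ E := dist_nonneg
  have hDr : r ≤ D := by
    have h := dist_nonneg (x := z) (y := γ 1); linarith [hzg ▸ h]
  have hpos : 0 < D + E := by linarith
  have hslope' : (D - 1 / n) * r < φ y - φ x := (lt_div_iff₀ hyx).mp hslope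
  have hphi : φ y - φ x ≤ (E ^ 2 - D ^ 2) / 2 := by
    have h1 := hle y
    linarith [heq]
  have hq : 2 * (D - 1 / n) / (D + E) * r ≤ E - D := by
    rw [div_mul_eq_mul_div, div_le_iff₀ hpos]
    nlinarith [hslope', hphi]
  constructor
  · linarith [htri, hxz]
  · have hring : (1 - 2 * (D - 1 / n) / (D + E)) * r
        = r - 2 * (D - 1 / n) / (D + E) * r := by ring
    rw [hring]
    linarith [htri2, hzg, hxz]
end

section
/- Let (X,d) be a geodesic metric space, φ a Kantorovich potential for cost d²/2, and γ ∈ Geo(X) with φ(γ_0) + φ^c(γ_1) = d²(γ_0,γ_1)/2. If φ is Lipschitz and |∇g⁺φ|(x) ≤ L for all x on the image of γ|_{[0,t]}, then φ(γ_0) − φ(γ_t) ≤ L·d(γ_0,γ_t); combined with the lower bound φ(γ_0) − φ(γ_t) ≥ ((2t−t²)/2) d²(γ_0,γ_1) this gives (1 − t/2)·d(γ_0,γ_1) ≤ L. -/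
open Filter Set Metric MeasureTheory Topology
open scoped ENNReal NNReal

variable {X : Type*} [MetricSpace X]

/-- If `φ` is Lipschitz, satisfies the Kantorovich relations along the geodesic `γ`
(with `c1 = φ^c(γ₁)`), and its slope along geodesics is bounded by `L` on `γ([0,t])`,
then `φ(γ₀) − φ(γ_t) ≤ L·d(γ₀,γ_t)`; combined with the lower bound
`φ(γ₀) − φ(γ_t) ≥ ((2t − t²)/2) d²(γ₀,γ₁)` this yields `(1 − t/2) d(γ₀,γ₁) ≤ L`. -/
theorem slope_bound_along_geodesic
    (φ : X → ℝ) (hlip : ∃ K : ℝ≥0, LipschitzWith K φ)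
    (γ : ℝ → X) (hγ : IsGeodesicSeg γ) (c1 : ℝ)
    (heq : φ (γ 0) + c1 = dist (γ 0) (γ 1) ^ 2 / 2)
    (hle : ∀ z : X, φ z + c1 ≤ dist z (γ 1) ^ 2 / 2)
    (L : ℝ) (hL0 : 0 ≤ L)
    (t : ℝ) (ht : t ∈ Set.Ioc (0:ℝ) 1)
    (hLbound : ∀ s ∈ Set.Icc (0:ℝ) t, geoSlope φ (γ s) ≤ ENNReal.ofReal L) :
    φ (γ 0) - φ (γ t) ≤ L * dist (γ 0) (γ t) ∧
      (1 - t / 2) * dist (γ 0) (γ 1) ≤ L := by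

  obtain ⟨K, hK⟩ := hlip
  have hd0 : (0:ℝ) ≤ dist (γ 0) (γ 1) := dist_nonneg
  set d : ℝ := dist (γ 0) (γ 1) with hd
  have ht0 : dist (γ 0) (γ t) = t * d := by
    have h := hγ 0 ⟨le_rfl, zero_le_one⟩ t ⟨ht.1.le, ht.2⟩
    rwa [sub_zero, abs_of_pos ht.1] at h
  have ht1 : dist (γ t) (γ 1) = (1 - t) * d := by
    have h := hγ t ⟨ht.1.le, ht.2⟩ 1 ⟨zero_le_one, le_rfl⟩
    rwa [abs_of_nonneg (by linarith [ht.2])] at h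
  have hlow : ((2*t - t^2)/2) * d^2 ≤ φ (γ 0) - φ (γ t) := by
    have h1 := hle (γ t)
    rw [ht1] at h1
    nlinarith [h1, heq]
  by_cases hdz : d = 0
  · have hγt : γ t = γ 0 := by
      rw [← dist_eq_zero, dist_comm, ht0, hdz, mul_zero]
    constructor
    · rw [hγt, sub_self]
      positivity
    · rw [hdz, mul_zero]; exact hL0
  have hdpos : 0 < d := lt_of_le_of_ne hd0 (Ne.symm hdz)
  set f : ℝ → ℝ := fun r => φ (γ (t - r)) with hfdef
  have hγlip : LipschitzOnWith (Real.toNNReal d) γ (Icc 0 1) := by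
    apply LipschitzOnWith.of_dist_le_mul
    intro x hx y hy
    rw [hγ x hx y hy, Real.coe_toNNReal d hd0, Real.dist_eq, abs_sub_comm]
    ring_nf
    exact le_rfl
  have hfc : ContinuousOn f (Icc 0 t) := by
    apply hK.continuous.comp_continuousOn
    apply hγlip.continuousOn.comp (by fun_prop)
    intro r hr
    exact ⟨by linarith [hr.2], by linarith [hr.1, ht.2]⟩
  have bound : ∀ x ∈ Ico (0:ℝ) t, ∀ r, (fun _ : ℝ => L * d) x < r →
      ∃ᶠ z in 𝓝[>] x, slope f x z < r := by
    intro x hx r hr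
    simp only at hr
    set s : ℝ := t - x with hsdef
    have hs0 : 0 < s := sub_pos.2 hx.2
    have hs1 : s ≤ 1 := by linarith [hx.1, ht.2]
    have hsIcc : s ∈ Icc (0:ℝ) t := ⟨hs0.le, by linarith [hx.1]⟩
    have hs01 : s ∈ Icc (0:ℝ) 1 := ⟨hs0.le, hs1⟩
    set σ : ℝ → X := fun v => γ (s * (1 - v)) with hσdef
    have h01 : ∀ u ∈ Icc (0:ℝ) 1, s * (1 - u) ∈ Icc (0:ℝ) 1 := by
      intro u hu
      constructor
      · nlinarith [hu.1, hu.2]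
      · nlinarith [hu.1, hu.2]
    have hσ0 : σ 0 = γ s := by show γ (s * (1 - 0)) = γ s; norm_num
    have hσ1 : σ 1 = γ 0 := by show γ (s * (1 - 1)) = γ 0; norm_num
    have hσ01 : dist (σ 0) (σ 1) = s * d := by
      rw [hσ0, hσ1, hγ s hs01 0 ⟨le_rfl, zero_le_one⟩, zero_sub, abs_neg,
        abs_of_pos hs0]
    have hσgeo : IsGeodesicSeg σ := by
      intro a ha b hb
      show dist (γ (s * (1 - a))) (γ (s * (1 - b))) = |b - a| * dist (σ 0) (σ 1)
      rw [hγ _ (h01 a ha) _ (h01 b hb), hσ01,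
        show s * (1 - b) - s * (1 - a) = s * (a - b) by ring, abs_mul,
        abs_of_pos hs0, abs_sub_comm]
      ring
    have hσne : σ 0 ≠ σ 1 := by
      rw [← dist_pos, hσ01]
      positivity
    have h1 : Filter.liminf
        (fun u => ENNReal.ofReal (max (φ (σ u) - φ (γ s)) 0 / dist (σ u) (γ s)))
        (𝓝[>] (0:ℝ)) ≤ geoSlope φ (γ s) := by
      apply le_iSup₂ (f := fun (σ' : ℝ → X)
        (_ : σ' ∈ {γ' : ℝ → X | IsGeodesicSeg γ' ∧ γ' 0 = γ s ∧ γ' 0 ≠ γ' 1}) =>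
        Filter.liminf
          (fun u => ENNReal.ofReal (max (φ (σ' u) - φ (γ s)) 0 / dist (σ' u) (γ s)))
          (𝓝[>] (0:ℝ))) σ ⟨hσgeo, hσ0, hσne⟩
    have hrd : L < r / d := (lt_div_iff₀ hdpos).2 hr
    have hrdpos : 0 < r / d := hL0.trans_lt hrd
    have h2 : Filter.liminf
        (fun u => ENNReal.ofReal (max (φ (σ u) - φ (γ s)) 0 / dist (σ u) (γ s)))
        (𝓝[>] (0:ℝ)) < ENNReal.ofReal (r / d) := by
      refine lt_of_le_of_lt (h1.trans (hLbound s hsIcc)) ?_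
      exact (ENNReal.ofReal_lt_ofReal_iff hrdpos).2 hrd
    have h3 := Filter.frequently_lt_of_liminf_lt (h := h2)
    have h4 : ∀ᶠ v in 𝓝[>] (0:ℝ), v ∈ Ioo (0:ℝ) 1 :=
      Ioo_mem_nhdsGT_of_mem ⟨le_rfl, one_pos⟩
    have h5 := h3.and_eventually h4
    have hmap : Filter.Tendsto (fun v : ℝ => x + s * v) (𝓝[>] (0:ℝ)) (𝓝[>] x) := by
      apply tendsto_nhdsWithin_of_tendsto_nhds_of_eventually_within
      · have hc : Filter.Tendsto (fun v : ℝ => x + s * v) (𝓝 0) (𝓝 (x + s * 0)) :=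
          ((continuous_const.add (continuous_const.mul continuous_id)).tendsto 0)
        simp only [mul_zero, add_zero] at hc
        exact hc.mono_left nhdsWithin_le_nhds
      · filter_upwards [self_mem_nhdsWithin] with v hv
        have : (0:ℝ) < v := hv
        show x < x + s * v
        nlinarith
    apply hmap.frequently
    refine h5.mono ?_
    rintro v ⟨hlt, hv0, hv1⟩
    have hdistv : dist (σ v) (γ s) = v * (s * d) := by
      have h := hσgeo 0 ⟨le_rfl, zero_le_one⟩ v ⟨hv0.le, hv1.le⟩
      rw [hσ01, sub_zero, abs_of_pos hv0] at h
      rw [dist_comm, hσ0] at h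
      exact h
    rw [hdistv] at hlt
    have hq : max (φ (σ v) - φ (γ s)) 0 / (v * (s * d)) < r / d :=
      (ENNReal.ofReal_lt_ofReal_iff hrdpos).1 hlt
    have hDpos : 0 < v * (s * d) := by positivity
    have hmaxlt : max (φ (σ v) - φ (γ s)) 0 < r / d * (v * (s * d)) :=
      (div_lt_iff₀ hDpos).1 hq
    have hreq : r / d * (v * (s * d)) = r * (s * v) := by
      field_simp
    rw [hreq] at hmaxlt
    have hφlt : φ (σ v) - φ (γ s) < r * (s * v) :=
      (le_max_left _ _).trans_lt hmaxlt
    have hz1 : t - (x + s * v) = s * (1 - v) := by rw [hsdef]; ring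
    have hfz : f (x + s * v) = φ (σ v) := by
      rw [hfdef]
      simp only
      rw [hz1]
    have hfx : f x = φ (γ s) := by rw [hfdef]
    rw [slope_def_field, hfz, hfx, show x + s * v - x = s * v by ring]
    rw [div_lt_iff₀ (by positivity : (0:ℝ) < s * v)]
    nlinarith [hφlt]
  have hBd : ∀ y ∈ Ico (0:ℝ) t, HasDerivWithinAt (fun r : ℝ => f 0 + L * d * r)
      ((fun _ : ℝ => L * d) y) (Ici y) y := by
    intro y _
    have : HasDerivAt (fun r : ℝ => f 0 + L * d * r) (L * d) y := by
      simpa using ((hasDerivAt_id y).const_mul (L * d)).const_add (f 0)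
    exact this.hasDerivWithinAt
  have key : ∀ ⦃y⦄, y ∈ Icc (0:ℝ) t → f y ≤ f 0 + L * d * y := by
    apply image_le_of_liminf_slope_right_le_deriv_boundary hfc (by simp) ?_ hBd bound
    fun_prop
  have hkeyt := key (right_mem_Icc.2 ht.1.le)
  have hft : f t = φ (γ 0) := by rw [hfdef]; simp
  have hf0 : f 0 = φ (γ t) := by rw [hfdef]; simp
  rw [hft, hf0] at hkeyt
  have hmain : φ (γ 0) - φ (γ t) ≤ L * dist (γ 0) (γ t) := by
    rw [ht0]; nlinarith [hkeyt]
  refine ⟨hmain, ?_⟩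
  rw [ht0] at hmain
  nlinarith [hlow, hmain, mul_pos ht.1 hdpos, ht.1, hdpos]
end
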